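/- Let B be a division ring and f : B → A an injective ring homomorphism into a nonzero ring A. Then every square matrix over B whose image under f is invertible over A is invertible over B. (Equivalently: every square matrix over a division ring is either invertible or a two-sided zero-divisor in the matrix ring.) -/
import Mathlib

/-- A ring homomorphism is *local* if it reflects invertibility of square matrices
of every size. -/
def MatLocal {B A : Type*} [Ring B] [Ring A] (f : B →+* A) : Prop :=
  ∀ (n : ℕ) (α : Matrix (Fin n) (Fin n) B), IsUnit (α.map f) → IsUnit α

/-- An injective ring homomorphism from a division ring into a nonzero ring is local:
every square matrix over `B` whose image is invertible is invertible. -/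
theorem stmt6 {B A : Type*} [DivisionRing B] [Ring A] [Nontrivial A]
    (f : B →+* A) (hf : Function.Injective f) :
    MatLocal f := by
  intro n α hu
  -- vecMul by α is injective
  have hinj : Function.Injective α.vecMulLinear := by
    rw [← LinearMap.ker_eq_bot, LinearMap.ker_eq_bot']
    intro v hv
    have hv0 : Matrix.vecMul v α = 0 := hv
    have hv' : Matrix.vecMul (f ∘ v) (α.map f) = 0 := by
      funext j
      rw [← RingHom.map_vecMul, hv0]
      simp
    obtain ⟨u, hu'⟩ := hu
    have : (f ∘ v) = 0 := by
      have h3 := congrArg (fun w => Matrix.vecMul w (u⁻¹).val) hv'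
      simp only [Matrix.vecMul_vecMul, hu', Matrix.zero_vecMul] at h3
      rw [← hu', u.mul_inv] at h3
      simpa using h3
    funext i
    exact hf (by simpa using congrFun this i)
  have hsurj : Function.Surjective α.vecMulLinear :=
    LinearMap.injective_iff_surjective.mp hinj
  obtain ⟨β, hβ⟩ := Matrix.vecMul_surjective_iff_exists_left_inverse.mp hsurj
  -- β * α = 1; show α * β = 1 by mapping through f
  have hmap : (α * β).map f = (1 : Matrix (Fin n) (Fin n) B).map f := by
    have h1 : (β.map f) * (α.map f) = 1 := by
      rw [← Matrix.map_mul, hβ, Matrix.map_one f f.map_zero f.map_one]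
    obtain ⟨u, hu'⟩ := hu
    have h2 : β.map f = (u⁻¹).val := by
      have h3 := congrArg (· * (u⁻¹).val) h1
      simp only [mul_assoc, hu', one_mul] at h3
      rw [← hu', u.mul_inv, mul_one] at h3
      exact h3
    rw [Matrix.map_mul, h2, ← hu', Matrix.map_one f f.map_zero f.map_one]
    exact u.mul_inv
  have hmapinj : Function.Injective
      (Matrix.map · f : Matrix (Fin n) (Fin n) B → Matrix (Fin n) (Fin n) A) := by
    intro X Y h
    ext i j
    exact hf (congrFun (congrFun (congrArg Matrix.of.symm h) i) j)
  exact ⟨⟨α, β, hmapinj hmap, hβ⟩, rfl⟩
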